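/- For every asymptotically stable function F, every dimension d ≥ 1 and number of colors k ≥ 1, there exists R ∈ ℕ such that for every coloring C of the d-element subsets of {0,1,...,R} with k colors, there exists a C-homogeneous finite set H ⊆ {0,...,R} with |H| > F(H). -/

import Mathlib

/-- `H` is homogeneous for the colouring `C` of `d`-element finite sets:
`C` is constant on the `d`-element subsets of `H`. -/
def HomogF (k d : ℕ) (C : Finset ℕ → Fin k) (H : Finset ℕ) : Prop :=
  ∃ c : Fin k, ∀ s : Finset ℕ, s ⊆ H → s.card = d → C s = c

/-- Homogeneity for a (possibly infinite) set `H ⊆ ℕ`. -/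
def HomogS (k d : ℕ) (C : Finset ℕ → Fin k) (H : Set ℕ) : Prop :=
  ∃ c : Fin k, ∀ s : Finset ℕ, ↑s ⊆ H → s.card = d → C s = c

/-- `F` is asymptotically stable: on every increasing chain of finite sets
the value of `F` eventually stabilises. -/
def AsympStable (F : Finset ℕ → ℕ) : Prop :=
  ∀ X : ℕ → Finset ℕ, (∀ i, X i ⊆ X (i + 1)) →
    ∃ i, ∀ j, i ≤ j → F (X j) = F (X i)


open Classical

lemma inf_pigeon {k : ℕ} (f : ℕ → Fin k) {S : Set ℕ} (hS : S.Infinite) :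
    ∃ c, {n | n ∈ S ∧ f n = c}.Infinite := by
  by_contra h
  push_neg at h
  have : S ⊆ ⋃ c : Fin k, {n | n ∈ S ∧ f n = c} := fun n hn => Set.mem_iUnion.2 ⟨f n, hn, rfl⟩
  exact hS (Set.Finite.subset (Set.finite_iUnion h) this)

lemma ramseyS (d : ℕ) : ∀ {k : ℕ}, 0 < k → ∀ (C : Finset ℕ → Fin k) (S : Set ℕ), S.Infinite →
    ∃ H : Set ℕ, H ⊆ S ∧ H.Infinite ∧
      ∃ c : Fin k, ∀ s : Finset ℕ, ↑s ⊆ H → s.card = d → C s = c := by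
  induction d with
  | zero =>
    intro k hk C S hS
    refine ⟨S, subset_rfl, hS, C ∅, fun s _ h0 => ?_⟩
    rw [Finset.card_eq_zero.mp h0]
  | succ d ih =>
    intro k hk C S hS
    -- one-step lemma
    have step : ∀ T : Set ℕ, T.Infinite → ∃ p : ℕ × Set ℕ × Fin k,
        p.1 ∈ T ∧ p.2.1 ⊆ T ∧ p.2.1.Infinite ∧ (∀ x ∈ p.2.1, p.1 < x) ∧
        ∀ s : Finset ℕ, ↑s ⊆ p.2.1 → s.card = d → C (insert p.1 s) = p.2.2 := by
      intro T hT
      obtain ⟨a, ha⟩ := hT.nonempty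
      have hT' : (T ∩ Set.Ioi a).Infinite := by
        have : T \ Set.Iic a = T ∩ Set.Ioi a := by
          ext x; simp [Set.mem_diff, not_le]
        simpa [this] using hT.diff (Set.finite_Iic a)
      obtain ⟨H', hH'sub, hH'inf, c, hc⟩ := ih hk (fun s => C (insert a s)) _ hT'
      refine ⟨⟨a, H', c⟩, ha, fun x hx => (hH'sub hx).1, hH'inf,
        fun x hx => (hH'sub hx).2, hc⟩
    -- build the sequence
    let pick : {T : Set ℕ // T.Infinite} → ℕ × Set ℕ × Fin k :=
      fun T => Classical.choose (step T.1 T.2)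
    have hpick : ∀ T : {T : Set ℕ // T.Infinite},
        (pick T).1 ∈ T.1 ∧ (pick T).2.1 ⊆ T.1 ∧ (pick T).2.1.Infinite ∧
        (∀ x ∈ (pick T).2.1, (pick T).1 < x) ∧
        ∀ s : Finset ℕ, ↑s ⊆ (pick T).2.1 → s.card = d →
          C (insert (pick T).1 s) = (pick T).2.2 :=
      fun T => Classical.choose_spec (step T.1 T.2)
    let g : ℕ → {T : Set ℕ // T.Infinite} :=
      fun n => Nat.rec ⟨S, hS⟩ (fun _ T => ⟨(pick T).2.1, (hpick T).2.2.1⟩) n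
    let a : ℕ → ℕ := fun n => (pick (g n)).1
    let col : ℕ → Fin k := fun n => (pick (g n)).2.2
    have hg_succ : ∀ n, (g (n+1)).1 ⊆ (g n).1 := fun n => (hpick (g n)).2.1
    have hg_mono : ∀ {n m}, n ≤ m → (g m).1 ⊆ (g n).1 := by
      intro n m h
      induction m with
      | zero => rw [Nat.le_zero.mp h]
      | succ m ih' =>
        rcases Nat.lt_or_ge n (m+1) with h' | h'
        · exact (hg_succ m).trans (ih' (Nat.lt_succ_iff.mp h'))
        · rw [le_antisymm h h']
    have ha_mem : ∀ n, a n ∈ (g n).1 := fun n => (hpick (g n)).1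
    have ha_lt : ∀ n, ∀ x ∈ (g (n+1)).1, a n < x := fun n => (hpick (g n)).2.2.2.1
    have ha_col : ∀ n, ∀ s : Finset ℕ, ↑s ⊆ (g (n+1)).1 → s.card = d →
        C (insert (a n) s) = col n := fun n => (hpick (g n)).2.2.2.2
    have ha_smono : ∀ {n m}, n < m → a n < a m := by
      intro n m h
      exact ha_lt n (a m) (hg_mono h (ha_mem m))
    have ha_inj : Function.Injective a := by
      intro n m h
      rcases lt_trichotomy n m with h' | h' | h'
      · exact absurd h (ne_of_lt (ha_smono h'))
      · exact h'
      · exact absurd h.symm (ne_of_lt (ha_smono h'))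
    -- pigeonhole on colours
    obtain ⟨c0, hI⟩ := inf_pigeon col (Set.infinite_univ (α := ℕ))
    set I : Set ℕ := {n | n ∈ Set.univ ∧ col n = c0} with hIdef
    refine ⟨a '' I, ?_, ?_, c0, ?_⟩
    · rintro x ⟨n, _, rfl⟩
      exact hg_mono (Nat.zero_le n) (ha_mem n)
    · exact hI.image (Set.injOn_of_injective ha_inj)
    · intro s hs hcard
      have hne : s.Nonempty := Finset.card_pos.mp (by omega)
      obtain ⟨n0, hn0I, hn0⟩ : ∃ n0 ∈ I, a n0 = s.min' hne := hs (s.min'_mem hne)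
      set s' := s.erase (a n0) with hs'def
      have hmem : a n0 ∈ s := hn0 ▸ s.min'_mem hne
      have hcard' : s'.card = d := by
        rw [hs'def, Finset.card_erase_of_mem hmem, hcard]; omega
      have hsub' : ↑s' ⊆ (g (n0+1)).1 := by
        intro x hx
        have hxs : x ∈ s := Finset.mem_of_mem_erase (by exact_mod_cast hx)
        obtain ⟨m, hmI, rfl⟩ := hs hxs
        have hne' : a m ≠ a n0 := Finset.ne_of_mem_erase (by exact_mod_cast hx)
        have : a n0 ≤ a m := hn0 ▸ s.min'_le _ hxs
        have hmn : n0 < m := by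
          by_contra hle
          push_neg at hle
          rcases lt_or_eq_of_le hle with h' | h'
          · exact absurd this (not_le.mpr (ha_smono h'))
          · exact hne' (by rw [h'])
        exact hg_mono hmn (ha_mem m)
      have : C (insert (a n0) s') = col n0 := ha_col n0 s' hsub' hcard'
      rw [hs'def] at this
      rw [Finset.insert_erase hmem] at this
      rw [this]
      exact hn0I.2

/-- Any coloring has arbitrarily large homogeneous chains inside an infinite homogeneous
set; combined with stability, `C` itself has a good finite set. -/
lemma good_finset (F : Finset ℕ → ℕ) (hF : AsympStable F) (d k : ℕ) (hk : 1 ≤ k)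
    (C : Finset ℕ → Fin k) :
    ∃ H : Finset ℕ, HomogF k d C H ∧ F H < H.card := by
  obtain ⟨Hinf, _, hInfinite, c, hc⟩ := ramseyS d hk C Set.univ Set.infinite_univ
  have hpick : ∀ t : Finset ℕ, ∃ x, x ∈ Hinf ∧ x ∉ t := by
    intro t
    obtain ⟨x, hx⟩ := (hInfinite.diff t.finite_toSet).nonempty
    exact ⟨x, hx.1, hx.2⟩
  choose f hf1 hf2 using hpick
  let X : ℕ → Finset ℕ := fun n => Nat.rec ∅ (fun _ t => insert (f t) t) n
  have hXsucc : ∀ n, X n ⊆ X (n+1) := fun n => Finset.subset_insert _ _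
  have hXsub : ∀ n, ∀ x ∈ X n, x ∈ Hinf := by
    intro n
    induction n with
    | zero => intro x hx; exact absurd hx (Finset.notMem_empty x)
    | succ n ih =>
      intro x hx
      have hx' : x ∈ insert (f (X n)) (X n) := hx
      rcases Finset.mem_insert.mp hx' with h | h
      · exact h ▸ hf1 (X n)
      · exact ih x h
  have hXcard : ∀ n, (X n).card = n := by
    intro n
    induction n with
    | zero => simp [X]
    | succ n ih =>
      show (insert (f (X n)) (X n)).card = n + 1
      rw [Finset.card_insert_of_notMem (hf2 (X n)), ih]
  obtain ⟨i, hi⟩ := hF X hXsucc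
  refine ⟨X (max i (F (X i) + 1)), ⟨c, fun s hs hcard =>
    hc s (fun x hx => hXsub _ x (hs hx)) hcard⟩, ?_⟩
  rw [hi _ (le_max_left _ _), hXcard]
  exact lt_of_lt_of_le (Nat.lt_succ_self _) (le_max_right _ _)

theorem frt_from_as (F : Finset ℕ → ℕ) (hF : AsympStable F)
    (d k : ℕ) (hd : 1 ≤ d) (hk : 1 ≤ k) :
    ∃ R : ℕ, ∀ C : Finset ℕ → Fin k,
      ∃ H : Finset ℕ, H ⊆ Finset.range (R + 1) ∧ HomogF k d C H ∧ F H < H.card := by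
  by_contra hcon
  push_neg at hcon
  choose CC hCC using hcon
  haveI : Fin k → True := fun _ => trivial
  haveI hkne : Nonempty (Fin k) := ⟨⟨0, hk⟩⟩
  let U : Ultrafilter ℕ := Ultrafilter.of Filter.cofinite
  have hUcof : ∀ A : Set ℕ, Aᶜ.Finite → A ∈ U := by
    intro A hA
    exact (Ultrafilter.of_le Filter.cofinite) hA
  -- limit coloring
  have hlim : ∀ s : Finset ℕ, ∃ c : Fin k, {R | CC R s = c} ∈ U := by
    intro s
    by_contra h
    push_neg at h
    have h' : ∀ c : Fin k, {R | CC R s = c}ᶜ ∈ U := fun c =>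
      (Ultrafilter.compl_mem_iff_notMem).mpr (h c)
    have : (⋂ c : Fin k, {R | CC R s = c}ᶜ) ∈ U :=
      (Filter.iInter_mem (f := (U : Filter ℕ))).mpr h'
    have hemp : (⋂ c : Fin k, {R | CC R s = c}ᶜ) = ∅ := by
      ext R
      simp only [Set.mem_iInter, Set.mem_compl_iff, Set.mem_setOf_eq, Set.mem_empty_iff_false,
        iff_false, not_forall, not_not]
      exact ⟨CC R s, rfl⟩
    rw [hemp] at this
    exact (Filter.empty_notMem (U : Filter ℕ)) this
  choose Clim hClim using hlim
  obtain ⟨H, ⟨c, hc⟩, hFH⟩ := good_finset F hF d k hk Clim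
  -- transfer to some CC R
  have hA : {R | ∀ s ∈ H.powerset, CC R s = Clim s} ∈ U := by
    have : (⋂ s ∈ H.powerset, {R | CC R s = Clim s}) ∈ U :=
      (Filter.biInter_finset_mem (f := (U : Filter ℕ)) H.powerset).mpr (fun s _ => hClim s)
    refine Filter.mem_of_superset this ?_
    intro R hR s hs
    exact Set.mem_iInter₂.mp hR s hs
  have hB : {R | H ⊆ Finset.range (R + 1)} ∈ U := by
    apply hUcof
    apply Set.Finite.subset (Set.finite_Iio (H.sup id))
    intro R hR
    simp only [Set.mem_compl_iff, Set.mem_setOf_eq] at hR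
    by_contra h
    simp only [Set.mem_Iio, not_lt] at h
    exact hR (fun x hx => Finset.mem_range.mpr
      (lt_of_le_of_lt (le_trans (Finset.le_sup (f := id) hx) h) (Nat.lt_succ_self R)))
  obtain ⟨R, hRA, hRB⟩ := (U.nonempty_of_mem (Filter.inter_mem hA hB))
  have hhom : HomogF k d (CC R) H := ⟨c, fun s hs hcard => by
    rw [hRA s (Finset.mem_powerset.mpr hs)]; exact hc s hs hcard⟩
  exact absurd hFH (not_lt.mpr (hCC R H hRB hhom))
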